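/- Let A be a scale Hessian operator on a scale Hilbert space H = {H_k}. Then the restriction of A to H^2, i.e., A : H₂ → H₁, is a scale Hessian operator on the shifted scale Hilbert space H¹ = {H_{k+1}}: it is symmetric with respect to a scalar product equivalent to ⟨·,·⟩₁ (namely the graph inner product), Fredholm of index 0 as a map H₂ → H₁, and satisfies the regularity axiom. -/

import Mathlib

open scoped RealInnerProductSpace
open Filter

section ScaleSetup

variable (H : ℕ → Type*) [∀ k, NormedAddCommGroup (H k)]
  [∀ k, InnerProductSpace ℝ (H k)] [∀ k, CompleteSpace (H k)]
  (incl : ∀ k, H (k + 1) →L[ℝ] H k)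

/-- The composite inclusion `H_{k+j} → H_k`. -/
noncomputable def chain : (k j : ℕ) → H (k + j) →L[ℝ] H k
  | k, 0 => ContinuousLinearMap.id ℝ (H k)
  | k, j + 1 => (chain k j).comp (incl (k + j))

/-- The composite inclusion `H_n → H_0`. -/
noncomputable def toBase : (n : ℕ) → H n →L[ℝ] H 0
  | 0 => ContinuousLinearMap.id ℝ (H 0)
  | n + 1 => (toBase n).comp (incl n)

/-- The composite inclusion `H_{n+1} → H_1`. -/
noncomputable def toOne : (n : ℕ) → H (n + 1) →L[ℝ] H 1
  | 0 => ContinuousLinearMap.id ℝ (H 1)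
  | n + 1 => (toOne n).comp (incl (n + 1))

/-- The composite inclusion `H_{n+2} → H_2`. -/
noncomputable def toTwo : (n : ℕ) → H (n + 2) →L[ℝ] H 2
  | 0 => ContinuousLinearMap.id ℝ (H 2)
  | n + 1 => (toTwo n).comp (incl (n + 2))

/-- A scale Hilbert space: a nested sequence of Hilbert spaces (given by
injective inclusion maps) with compact inclusions and with the common
intersection `H_∞` dense in each level. -/
def IsScaleHilbert : Prop :=
  (∀ k, Function.Injective (incl k)) ∧
  (∀ k, IsCompactOperator (incl k)) ∧
  (∀ k, Dense (⋂ j, Set.range (chain H incl k j)))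

/-- A scale Hessian operator on a scale Hilbert space: a family of bounded
operators `A_k : H_{k+1} → H_k` compatible with the inclusions such that
`A_0 : H_1 → H_0` is symmetric w.r.t. `⟨·,·⟩₀`, Fredholm of index 0, and
regular: `ξ ∈ H_1`, `A ξ ∈ H_n` imply `ξ ∈ H_{n+1}`. -/
def IsScaleHessian (A : ∀ k, H (k + 2) →L[ℝ] H (k + 1)) (A₀ : H 1 →L[ℝ] H 0) :
    Prop :=
  ((incl 0).comp (A 0) = A₀.comp (incl 1)) ∧
  (∀ k, (incl (k + 1)).comp (A (k + 1)) = (A k).comp (incl (k + 2))) ∧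
  (∀ ξ η : H 1, ⟪incl 0 ξ, A₀ η⟫ = ⟪A₀ ξ, incl 0 η⟫) ∧
  FiniteDimensional ℝ (LinearMap.ker (A₀ : H 1 →ₗ[ℝ] H 0)) ∧
  IsClosed ((LinearMap.range (A₀ : H 1 →ₗ[ℝ] H 0) : Submodule ℝ (H 0)) : Set (H 0)) ∧
  (Module.finrank ℝ (LinearMap.ker (A₀ : H 1 →ₗ[ℝ] H 0)) =
    Module.finrank ℝ ((LinearMap.range (A₀ : H 1 →ₗ[ℝ] H 0))ᗮ : Submodule ℝ (H 0))) ∧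
  (∀ (ξ : H 1) (n : ℕ) (η : H n), toBase H incl n η = A₀ ξ →
    ∃ ζ : H (n + 1), toOne H incl n ζ = ξ)

end ScaleSetup


section Aux

lemma aux_bdd_below {E F : Type*} [NormedAddCommGroup E] [NormedSpace ℝ E]
    [NormedAddCommGroup F] [NormedSpace ℝ F] [CompleteSpace E] [CompleteSpace F]
    (f : E →L[ℝ] F) (hinj : Function.Injective f)
    (hcl : IsClosed ((LinearMap.range (f : E →ₗ[ℝ] F) : Submodule ℝ F) : Set F)) :
    ∃ c : ℝ, 0 < c ∧ ∀ x, c * ‖x‖ ≤ ‖f x‖ := by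
  haveI : CompleteSpace (LinearMap.range (f : E →ₗ[ℝ] F)) := hcl.completeSpace_coe
  set R : Submodule ℝ F := LinearMap.range (f : E →ₗ[ℝ] F) with hR
  let f' : E →L[ℝ] R := f.codRestrict R (fun x => LinearMap.mem_range_self _ x)
  have hker : LinearMap.ker (f' : E →ₗ[ℝ] R) = ⊥ := by
    apply LinearMap.ker_eq_bot.mpr
    intro x y hxy
    apply hinj
    have : ((f' x : F)) = (f' y : F) := by rw [show f' x = f' y from hxy]
    simpa [f'] using this
  have hrange : LinearMap.range (f' : E →ₗ[ℝ] R) = ⊤ := by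
    rw [LinearMap.range_eq_top]
    rintro ⟨y, hy⟩
    obtain ⟨x, hx⟩ := hy
    exact ⟨x, by simp [f', Subtype.ext_iff, hx]⟩
  let e := ContinuousLinearEquiv.ofBijective f' hker hrange
  set C := ‖(e.symm : R →L[ℝ] E)‖ with hC
  have hC0 : 0 ≤ C := norm_nonneg _
  refine ⟨(C + 1)⁻¹, by positivity, fun x => ?_⟩
  have h1 : ‖x‖ = ‖e.symm (e x)‖ := by rw [e.symm_apply_apply]
  have h2 : ‖e.symm (e x)‖ ≤ C * ‖e x‖ := (e.symm : R →L[ℝ] E).le_opNorm _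
  have h3 : ‖e x‖ = ‖f x‖ := rfl
  have h4 : ‖x‖ ≤ (C + 1) * ‖f x‖ := by
    nlinarith [norm_nonneg (f x), h1 ▸ h2, h3]
  rw [inv_mul_le_iff₀ (by positivity)]
  linarith

lemma aux_finrank_quot {E Q : Type*} [NormedAddCommGroup E] [NormedSpace ℝ E]
    [NormedAddCommGroup Q] [NormedSpace ℝ Q]
    (φ : E →ₗ[ℝ] Q) (hd : Dense ((LinearMap.range φ : Submodule ℝ Q) : Set Q)) :
    Module.finrank ℝ (E ⧸ LinearMap.ker φ) = Module.finrank ℝ Q := by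
  set R : Submodule ℝ Q := LinearMap.range φ with hRdef
  have key : ∀ (_ : FiniteDimensional ℝ R), R = ⊤ := by
    intro h
    have hc : IsClosed (R : Set Q) := R.closed_of_finiteDimensional
    have hcl : (R : Set Q) = Set.univ := by
      rw [← hc.closure_eq, hd.closure_eq]
    exact Submodule.eq_top_iff'.mpr fun x => by
      rw [← SetLike.mem_coe, hcl]; trivial
  by_cases hQ : FiniteDimensional ℝ Q
  · haveI := hQ
    have hR : R = ⊤ := key inferInstance
    have hsurj : Function.Surjective φ := by
      rw [← LinearMap.range_eq_top]; exact hR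
    exact (LinearMap.quotKerEquivOfSurjective φ hsurj).finrank_eq
  · rw [Module.finrank_of_infinite_dimensional hQ]
    suffices h : ¬FiniteDimensional ℝ (E ⧸ LinearMap.ker φ) by
      rw [Module.finrank_of_infinite_dimensional h]
    intro h
    haveI := h
    haveI : FiniteDimensional ℝ R := (LinearMap.quotKerEquivRange φ).finiteDimensional
    have hR : R = ⊤ := key inferInstance
    haveI : FiniteDimensional ℝ (⊤ : Submodule ℝ Q) := hR ▸ ‹FiniteDimensional ℝ R›
    exact hQ (Submodule.topEquiv.finiteDimensional)

variable {H : ℕ → Type*} [∀ k, NormedAddCommGroup (H k)]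
  [∀ k, InnerProductSpace ℝ (H k)] [∀ k, CompleteSpace (H k)]
  (incl : ∀ k, H (k + 1) →L[ℝ] H k)

lemma aux_toBase_succ : ∀ (n : ℕ) (x : H (n + 1)),
    toBase H incl (n + 1) x = incl 0 (toOne H incl n x) := by
  intro n
  induction n with
  | zero => intro x; simp [toBase, toOne]
  | succ n ih =>
    intro x
    show toBase H incl (n + 1) (incl (n + 1) x) = _
    rw [ih]
    rfl

lemma aux_toOne_succ : ∀ (n : ℕ) (x : H (n + 2)),
    toOne H incl (n + 1) x = incl 1 (toTwo H incl n x) := by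
  intro n
  induction n with
  | zero => intro x; simp [toOne, toTwo]
  | succ n ih =>
    intro x
    show toOne H incl (n + 1) (incl (n + 2) x) = _
    rw [ih]
    rfl

omit [∀ k, CompleteSpace (H k)] in
lemma aux_toBase_one (x : H 1) : toBase H incl 1 x = incl 0 x := by
  show toBase H incl (0 + 1) x = incl 0 x
  simp [toBase]

omit [∀ k, CompleteSpace (H k)] in
lemma aux_toOne_one (x : H 2) : toOne H incl 1 x = incl 1 x := by
  show toOne H incl (0 + 1) x = incl 1 x
  simp [toOne]

end Aux

set_option maxHeartbeats 2000000

/-- if `A` is a scale Hessian operator on the scale Hilbert space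
`H = {H_k}`, then its restriction `A_1 : H_2 → H_1` is a scale Hessian operator
on the shifted scale Hilbert space `H¹ = {H_{k+1}}`: it is symmetric with
respect to the graph inner product
`⟨ξ,η⟩_A = ⟨ξ,η⟩₀ + ⟨A₀ξ, A₀η⟩₀` (which is equivalent to `⟨·,·⟩₁`),
Fredholm of index 0 as a map `H_2 → H_1`, and satisfies the regularity axiom. -/
theorem stmt_18 (H : ℕ → Type*) [∀ k, NormedAddCommGroup (H k)]
    [∀ k, InnerProductSpace ℝ (H k)] [∀ k, CompleteSpace (H k)]
    (incl : ∀ k, H (k + 1) →L[ℝ] H k)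
    (hscale : IsScaleHilbert H incl)
    (A : ∀ k, H (k + 2) →L[ℝ] H (k + 1)) (A₀ : H 1 →L[ℝ] H 0)
    (hhess : IsScaleHessian H incl A A₀) :
    -- the graph inner product on `H_1` is equivalent to `⟨·,·⟩₁`
    (∃ c C : ℝ, 0 < c ∧ 0 < C ∧ ∀ a : H 1,
      c * ‖a‖ ^ 2 ≤ ‖incl 0 a‖ ^ 2 + ‖A₀ a‖ ^ 2 ∧
      ‖incl 0 a‖ ^ 2 + ‖A₀ a‖ ^ 2 ≤ C * ‖a‖ ^ 2) ∧
    -- `A_1` is symmetric with respect to the graph inner product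
    (∀ ξ η : H 2,
      (⟪incl 0 (incl 1 ξ), incl 0 (A 0 η)⟫ + ⟪A₀ (incl 1 ξ), A₀ (A 0 η)⟫)
        = (⟪incl 0 (A 0 ξ), incl 0 (incl 1 η)⟫ + ⟪A₀ (A 0 ξ), A₀ (incl 1 η)⟫)) ∧
    -- `A_1 : H_2 → H_1` is Fredholm of index 0
    FiniteDimensional ℝ (LinearMap.ker (A 0 : H 2 →ₗ[ℝ] H 1)) ∧
    IsClosed ((LinearMap.range (A 0 : H 2 →ₗ[ℝ] H 1) : Submodule ℝ (H 1)) : Set (H 1)) ∧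
    (Module.finrank ℝ (LinearMap.ker (A 0 : H 2 →ₗ[ℝ] H 1)) =
      Module.finrank ℝ ((LinearMap.range (A 0 : H 2 →ₗ[ℝ] H 1))ᗮ : Submodule ℝ (H 1))) ∧
    -- `A_1` satisfies the regularity axiom on the shifted scale
    (∀ (ξ : H 2) (n : ℕ) (η : H (n + 1)), toOne H incl n η = A 0 ξ →
      ∃ ζ : H (n + 2), toTwo H incl n ζ = ξ) := by

  obtain ⟨hinj, -, hdense⟩ := hscale
  obtain ⟨h01, -, hsym, hkerfd, hclosed, hind, hreg⟩ := hhess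
  have h01' : ∀ x : H 2, incl 0 (A 0 x) = A₀ (incl 1 x) := by
    intro x
    calc incl 0 (A 0 x) = ((incl 0).comp (A 0)) x := rfl
      _ = (A₀.comp (incl 1)) x := by rw [h01]
      _ = A₀ (incl 1 x) := rfl
  have hchar : ∀ η : H 1, η ∈ LinearMap.range (A 0 : H 2 →ₗ[ℝ] H 1) ↔ incl 0 η ∈ LinearMap.range (A₀ : H 1 →ₗ[ℝ] H 0) := by
    intro η
    constructor
    · rintro ⟨ξ, rfl⟩; exact ⟨incl 1 ξ, (h01' ξ).symm⟩
    · rintro ⟨x, hx⟩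
      obtain ⟨ζ, hζ⟩ := hreg x 1 η (by rw [aux_toBase_one]; exact hx.symm)
      rw [aux_toOne_one] at hζ
      refine ⟨ζ, hinj 0 ?_⟩
      rw [ContinuousLinearMap.coe_coe, h01' ζ, hζ]; exact hx
  have hNclosed : IsClosed ((LinearMap.range (A 0 : H 2 →ₗ[ℝ] H 1) : Submodule ℝ (H 1)) : Set (H 1)) := by
    have hset : ((LinearMap.range (A 0 : H 2 →ₗ[ℝ] H 1) : Submodule ℝ (H 1)) : Set (H 1))
        = (incl 0) ⁻¹' ((LinearMap.range (A₀ : H 1 →ₗ[ℝ] H 0) : Submodule ℝ (H 0)) : Set (H 0)) := by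
      ext η; simpa [Set.mem_preimage] using hchar η
    rw [hset]
    exact hclosed.preimage (incl 0).continuous
  haveI := hkerfd
  have hmem : ∀ x ∈ LinearMap.ker (A 0 : H 2 →ₗ[ℝ] H 1), ((incl 1 : H 2 →L[ℝ] H 1) : H 2 →ₗ[ℝ] H 1) x ∈ LinearMap.ker (A₀ : H 1 →ₗ[ℝ] H 0) := by
    intro x hx
    simp only [LinearMap.mem_ker] at hx ⊢
    show A₀ (incl 1 x) = 0
    rw [← h01' x]
    show incl 0 (A 0 x) = 0
    rw [show A 0 x = 0 from hx, map_zero]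
  let fk : LinearMap.ker (A 0 : H 2 →ₗ[ℝ] H 1) →ₗ[ℝ] LinearMap.ker (A₀ : H 1 →ₗ[ℝ] H 0) :=
    LinearMap.restrict ((incl 1 : H 2 →L[ℝ] H 1) : H 2 →ₗ[ℝ] H 1) hmem
  have hfk_apply : ∀ a : LinearMap.ker (A 0 : H 2 →ₗ[ℝ] H 1), (fk a : H 1) = incl 1 (a : H 2) := fun a => rfl
  have hfk_inj : Function.Injective fk := by
    intro a b hab
    apply Subtype.ext
    apply hinj 1
    have := congrArg (Subtype.val) hab
    rwa [hfk_apply, hfk_apply] at this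
  have hfk_surj : Function.Surjective fk := by
    rintro ⟨y, hy⟩
    have hy' : A₀ y = 0 := LinearMap.mem_ker.mp hy
    obtain ⟨ζ, hζ⟩ := hreg y 1 (0 : H 1)
      (by rw [aux_toBase_one, map_zero, hy'])
    rw [aux_toOne_one] at hζ
    have hζ' : incl 1 ζ = y := hζ
    have hζker : ζ ∈ LinearMap.ker (A 0 : H 2 →ₗ[ℝ] H 1) := by
      simp only [LinearMap.mem_ker]
      apply hinj 0
      rw [ContinuousLinearMap.coe_coe, h01' ζ, hζ', hy', map_zero]
    exact ⟨⟨ζ, hζker⟩, Subtype.ext (by rw [hfk_apply]; exact hζ')⟩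
  haveI hkerA0fd : FiniteDimensional ℝ (LinearMap.ker (A 0 : H 2 →ₗ[ℝ] H 1)) :=
    FiniteDimensional.of_injective fk hfk_inj
  have ekq : Module.finrank ℝ (LinearMap.ker (A 0 : H 2 →ₗ[ℝ] H 1)) = Module.finrank ℝ (LinearMap.ker (A₀ : H 1 →ₗ[ℝ] H 0)) :=
    (LinearEquiv.ofBijective fk ⟨hfk_inj, hfk_surj⟩).finrank_eq
  -- dense range of `incl 0`
  have hd0 : DenseRange ⇑(incl 0) := by
    refine (hdense 0).mono ?_
    intro x hx
    obtain ⟨y, hy⟩ := Set.mem_iInter.mp hx 1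
    refine ⟨y, ?_⟩
    rw [← hy]; rfl
  -- the quotient argument
  set V : Submodule ℝ (H 0) := LinearMap.range (A₀ : H 1 →ₗ[ℝ] H 0) with hVdef
  haveI hVcl : IsClosed (V : Set (H 0)) := hclosed
  let φ : H 1 →ₗ[ℝ] (H 0 ⧸ V) := V.mkQ.comp ((incl 0 : H 1 →L[ℝ] H 0) : H 1 →ₗ[ℝ] H 0)
  have hkerφ : LinearMap.ker φ = LinearMap.range (A 0 : H 2 →ₗ[ℝ] H 1) := by
    ext η
    simp only [φ, LinearMap.mem_ker, LinearMap.comp_apply, ContinuousLinearMap.coe_coe,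
      Submodule.mkQ_apply, Submodule.Quotient.mk_eq_zero]
    exact (hchar η).symm
  have hcont_mkQ : Continuous ⇑V.mkQ :=
    AddMonoidHomClass.continuous_of_bound V.mkQ 1 (fun x => by
      simpa using Submodule.Quotient.norm_mk_le (S := V) x)
  have hdφ : Dense ((LinearMap.range φ : Submodule ℝ (H 0 ⧸ V)) : Set (H 0 ⧸ V)) := by
    have h2 : DenseRange ⇑V.mkQ := V.mkQ_surjective.denseRange
    have h3 : DenseRange (⇑V.mkQ ∘ ⇑(incl 0)) := h2.comp hd0 hcont_mkQ
    rw [LinearMap.coe_range]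
    exact h3
  have hq1 : Module.finrank ℝ (H 1 ⧸ (LinearMap.range (A 0 : H 2 →ₗ[ℝ] H 1) : Submodule ℝ (H 1)))
      = Module.finrank ℝ (H 0 ⧸ V) := by
    rw [← hkerφ]
    exact aux_finrank_quot φ hdφ
  haveI : CompleteSpace V := hclosed.completeSpace_coe
  have eV : (H 0 ⧸ V) ≃ₗ[ℝ] ↥(Vᗮ) :=
    Submodule.quotientEquivOfIsCompl V Vᗮ Submodule.isCompl_orthogonal_of_hasOrthogonalProjection
  haveI : CompleteSpace (LinearMap.range (A 0 : H 2 →ₗ[ℝ] H 1) : Submodule ℝ (H 1)) :=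
    hNclosed.completeSpace_coe
  have eN : (H 1 ⧸ (LinearMap.range (A 0 : H 2 →ₗ[ℝ] H 1) : Submodule ℝ (H 1)))
      ≃ₗ[ℝ] ↥((LinearMap.range (A 0 : H 2 →ₗ[ℝ] H 1) : Submodule ℝ (H 1))ᗮ) :=
    Submodule.quotientEquivOfIsCompl _ _ Submodule.isCompl_orthogonal_of_hasOrthogonalProjection
  have hfin5 : Module.finrank ℝ (LinearMap.ker (A 0 : H 2 →ₗ[ℝ] H 1)) =
      Module.finrank ℝ ((LinearMap.range (A 0 : H 2 →ₗ[ℝ] H 1) : Submodule ℝ (H 1))ᗮ :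
        Submodule ℝ (H 1)) := by
    calc Module.finrank ℝ (LinearMap.ker (A 0 : H 2 →ₗ[ℝ] H 1))
        = Module.finrank ℝ (LinearMap.ker (A₀ : H 1 →ₗ[ℝ] H 0)) := ekq
      _ = Module.finrank ℝ ↥(Vᗮ) := hind
      _ = Module.finrank ℝ (H 0 ⧸ V) := eV.finrank_eq.symm
      _ = Module.finrank ℝ (H 1 ⧸ (LinearMap.range (A 0 : H 2 →ₗ[ℝ] H 1) : Submodule ℝ (H 1))) := hq1.symm
      _ = _ := eN.finrank_eq
  -- the norm equivalence
  have hequiv : ∃ c C : ℝ, 0 < c ∧ 0 < C ∧ ∀ a : H 1,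
      c * ‖a‖ ^ 2 ≤ ‖incl 0 a‖ ^ 2 + ‖A₀ a‖ ^ 2 ∧
      ‖incl 0 a‖ ^ 2 + ‖A₀ a‖ ^ 2 ≤ C * ‖a‖ ^ 2 := by
    set K : Submodule ℝ (H 1) := LinearMap.ker (A₀ : H 1 →ₗ[ℝ] H 0) with hKdef
    haveI : FiniteDimensional ℝ K := hkerfd
    haveI : CompleteSpace K := (K.closed_of_finiteDimensional).completeSpace_coe
    haveI : CompleteSpace ↥(Kᗮ) := K.isClosed_orthogonal.completeSpace_coe
    let S : ↥(Kᗮ) →L[ℝ] H 0 := A₀.comp (Kᗮ).subtypeL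
    have hS_inj : Function.Injective S := by
      intro a b hab
      have hmemk : ((a : H 1) - b) ∈ K := by
        simp only [hKdef, LinearMap.mem_ker, map_sub]
        have : S a = S b := hab
        have h' : A₀ (a : H 1) = A₀ (b : H 1) := this
        rw [ContinuousLinearMap.coe_coe, h', sub_self]
      have hmem2 : ((a : H 1) - (b : H 1)) ∈ Kᗮ := Submodule.sub_mem _ a.2 b.2
      have hz : ((a : H 1) - b) = 0 := by
        have := (Submodule.mem_orthogonal _ _).mp hmem2 _ hmemk
        exact inner_self_eq_zero.mp this
      exact Subtype.ext (sub_eq_zero.mp hz)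
    have hS_range : LinearMap.range (S : ↥(Kᗮ) →ₗ[ℝ] H 0) = V := by
      apply le_antisymm
      · rintro _ ⟨w, rfl⟩
        exact ⟨(w : H 1), rfl⟩
      · rintro _ ⟨a, rfl⟩
        refine ⟨⟨a - (K.orthogonalProjectionOnto a : H 1),
          K.sub_starProjection_mem_orthogonal a⟩, ?_⟩
        show A₀ (a - (K.orthogonalProjectionOnto a : H 1)) = A₀ a
        rw [map_sub, show A₀ (K.orthogonalProjectionOnto a : H 1) = 0 from LinearMap.mem_ker.mp (K.orthogonalProjectionOnto a).2, sub_zero]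
    have hS_closed : IsClosed ((LinearMap.range (S : ↥(Kᗮ) →ₗ[ℝ] H 0) : Submodule ℝ (H 0)) : Set (H 0)) := by
      rw [hS_range]; exact hclosed
    obtain ⟨c₁, hc₁, hS_bdd⟩ := aux_bdd_below S hS_inj hS_closed
    let J : ↥K →L[ℝ] H 0 := (incl 0).comp K.subtypeL
    have hJ_inj : Function.Injective J := by
      intro a b hab
      exact Subtype.ext (hinj 0 hab)
    haveI : FiniteDimensional ℝ (LinearMap.range (J : ↥K →ₗ[ℝ] H 0) : Submodule ℝ (H 0)) := by
      have : Function.Surjective (J.toLinearMap.rangeRestrict) := LinearMap.surjective_rangeRestrict _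
      exact Module.Finite.of_surjective _ this
    have hJ_closed : IsClosed ((LinearMap.range (J : ↥K →ₗ[ℝ] H 0) : Submodule ℝ (H 0)) : Set (H 0)) :=
      Submodule.closed_of_finiteDimensional _
    obtain ⟨c₂, hc₂, hJ_bdd⟩ := aux_bdd_below J hJ_inj hJ_closed
    set M := ‖incl 0‖ with hM
    have hM0 : 0 ≤ M := norm_nonneg _
    have hmain : ∀ a : H 1,
        min c₂ 1 * ‖a‖ ≤ ‖incl 0 a‖ + ((M + 1) / c₁) * ‖A₀ a‖ := by
      intro a
      set k : H 1 := ↑(K.orthogonalProjectionOnto a) with hk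
      set w : H 1 := a - k with hw
      have hkmem : k ∈ K := (K.orthogonalProjectionOnto a).2
      have hwmem : w ∈ Kᗮ := K.sub_starProjection_mem_orthogonal a
      have ha : a = k + w := by rw [hw]; abel
      have h1 : A₀ a = S ⟨w, hwmem⟩ := by
        show A₀ a = A₀ w
        rw [hw, map_sub, show A₀ k = 0 from LinearMap.mem_ker.mp hkmem, sub_zero]
      have h2 : c₁ * ‖w‖ ≤ ‖A₀ a‖ := by
        rw [h1]; exact hS_bdd ⟨w, hwmem⟩
      have h3 : c₂ * ‖k‖ ≤ ‖incl 0 k‖ := hJ_bdd ⟨k, hkmem⟩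
      have hsum : incl 0 a = incl 0 k + incl 0 w := by rw [ha, map_add]
      have h4 : ‖incl 0 k‖ ≤ ‖incl 0 a‖ + M * ‖w‖ := by
        have hkk : incl 0 k = incl 0 a - incl 0 w := by rw [hsum]; abel
        rw [hkk]
        have hle := (incl 0).le_opNorm w
        calc ‖incl 0 a - incl 0 w‖ ≤ ‖incl 0 a‖ + ‖incl 0 w‖ := norm_sub_le _ _
          _ ≤ ‖incl 0 a‖ + M * ‖w‖ := by rw [hM]; linarith
      have h5 : ‖a‖ ≤ ‖k‖ + ‖w‖ := by rw [ha]; exact norm_add_le _ _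
      have hdiv : (M + 1) * ‖w‖ ≤ (M + 1) / c₁ * ‖A₀ a‖ := by
        rw [div_mul_eq_mul_div, le_div_iff₀ hc₁]
        nlinarith [mul_le_mul_of_nonneg_left h2 (by linarith : (0:ℝ) ≤ M + 1)]
      have hm0 : (0:ℝ) < min c₂ 1 := lt_min hc₂ one_pos
      have e5 : min c₂ 1 * ‖a‖ ≤ min c₂ 1 * (‖k‖ + ‖w‖) :=
        mul_le_mul_of_nonneg_left h5 hm0.le
      have e6 : min c₂ 1 * ‖k‖ ≤ c₂ * ‖k‖ :=
        mul_le_mul_of_nonneg_right (min_le_left _ _) (norm_nonneg _)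
      have e7 : min c₂ 1 * ‖w‖ ≤ 1 * ‖w‖ :=
        mul_le_mul_of_nonneg_right (min_le_right _ _) (norm_nonneg _)
      nlinarith [e5, e6, e7, h2, h3, h4, hdiv]
    set D := (M + 1) / c₁ with hD
    have hD0 : 0 < D := by positivity
    set E := max D 1 with hE
    have hE1 : (1:ℝ) ≤ E := le_max_right _ _
    have hE0 : (0:ℝ) < E := lt_of_lt_of_le one_pos hE1
    have hDE : D ≤ E := le_max_left _ _
    have hmain2 : ∀ a : H 1, (min c₂ 1 / E) * ‖a‖ ≤ ‖incl 0 a‖ + ‖A₀ a‖ := by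
      intro a
      have h := hmain a
      have hx := norm_nonneg (incl 0 a)
      have hy := norm_nonneg (A₀ a)
      rw [div_mul_eq_mul_div, div_le_iff₀ hE0]
      have e1 : (E - 1) * ‖incl 0 a‖ ≥ 0 := mul_nonneg (by linarith) hx
      have e2 : (E - D) * ‖A₀ a‖ ≥ 0 := mul_nonneg (by linarith) hy
      nlinarith [h]
    have hm0 : (0:ℝ) < min c₂ 1 := lt_min hc₂ one_pos
    have hc0 : (0:ℝ) < min c₂ 1 / E := by positivity
    refine ⟨(min c₂ 1 / E) ^ 2 / 2, ‖incl 0‖ ^ 2 + ‖A₀‖ ^ 2 + 1,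
      by positivity, by positivity, fun a => ?_⟩
    have h := hmain2 a
    have hx := norm_nonneg (incl 0 a)
    have hy := norm_nonneg (A₀ a)
    have hna := norm_nonneg a
    constructor
    · have hsq : ((min c₂ 1 / E) * ‖a‖) ^ 2 ≤ (‖incl 0 a‖ + ‖A₀ a‖) ^ 2 :=
        pow_le_pow_left₀ (by positivity) h 2
      nlinarith [hsq, sq_nonneg (‖incl 0 a‖ - ‖A₀ a‖)]
    · have h1 := (incl 0).le_opNorm a
      have h2 := A₀.le_opNorm a
      nlinarith [mul_self_le_mul_self hx h1, mul_self_le_mul_self hy h2, sq_nonneg ‖a‖]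
  -- regularity
  have hreg2 : ∀ (ξ : H 2) (n : ℕ) (η : H (n + 1)), toOne H incl n η = A 0 ξ →
      ∃ ζ : H (n + 2), toTwo H incl n ζ = ξ := by
    intro ξ n η hη
    have h1 : toBase H incl (n + 1) η = A₀ (incl 1 ξ) := by
      rw [aux_toBase_succ incl n η, hη, h01' ξ]
    obtain ⟨ζ, hζ⟩ := hreg (incl 1 ξ) (n + 1) η h1
    refine ⟨ζ, hinj 1 ?_⟩
    rw [← aux_toOne_succ incl n ζ]
    exact hζ
  refine ⟨hequiv, ?_, hkerA0fd, hNclosed, hfin5, hreg2⟩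
  intro ξ η
  have e1 : incl 0 (A 0 η) = A₀ (incl 1 η) := h01' η
  have e2 : incl 0 (A 0 ξ) = A₀ (incl 1 ξ) := h01' ξ
  calc ⟪incl 0 (incl 1 ξ), incl 0 (A 0 η)⟫ + ⟪A₀ (incl 1 ξ), A₀ (A 0 η)⟫
      = ⟪incl 0 (incl 1 ξ), A₀ (incl 1 η)⟫ + ⟪incl 0 (A 0 ξ), A₀ (A 0 η)⟫ := by
        rw [e1, ← e2]
    _ = ⟪A₀ (incl 1 ξ), incl 0 (incl 1 η)⟫ + ⟪A₀ (A 0 ξ), incl 0 (A 0 η)⟫ := by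
        rw [hsym (incl 1 ξ) (incl 1 η), hsym (A 0 ξ) (A 0 η)]
    _ = ⟪incl 0 (A 0 ξ), incl 0 (incl 1 η)⟫ + ⟪A₀ (A 0 ξ), A₀ (incl 1 η)⟫ := by
        rw [← e2, e1]
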